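/- The exponential generating functions satisfy S(x,q;z) = S(x,z)^q, i.e., Σ_{n≥0} S_n(x,q) z^n/n! = (Σ_{n≥0} S_n(x) z^n/n!)^q, where S_n(x,q) satisfies S_{n+1}(x,q) = (q+nx)S_n(x,q) + x(1-2x)∂_x S_n(x,q), S_0=1, and S_n(x) = S_n(x,1). -/

import Mathlib

open Polynomial in
/-- The bivariate polynomials `S_n(x,q)`, as polynomials in `x` over `ℚ[q]`, defined by
`S_0 = 1` and `S_{n+1}(x,q) = (q + n x)·S_n(x,q) + x(1-2x)·∂_x S_n(x,q)`.
Here the inner variable is `q` and the outer variable is `x`. -/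
noncomputable def SqA : ℕ → Polynomial (Polynomial ℚ)
  | 0 => 1
  | n + 1 =>
      (Polynomial.C Polynomial.X + Polynomial.C ((n : ℚ) • (1 : Polynomial ℚ)) * X) * SqA n +
        X * (1 - 2 * X) * (SqA n).derivative

/-- `S_n(x) = S_n(x,1)`: the specialization of `S_n(x,q)` at `q = 1`. -/
noncomputable def SxA (n : ℕ) : Polynomial (Polynomial ℚ) :=
  (SqA n).map ((Polynomial.C : ℚ →+* Polynomial ℚ).comp (Polynomial.evalRingHom (1 : ℚ)))

/-- Formal derivative `d/dz` of a power series. -/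
noncomputable def Dz (F : PowerSeries (Polynomial (Polynomial ℚ))) :
    PowerSeries (Polynomial (Polynomial ℚ)) :=
  PowerSeries.mk fun n => (n + 1) • PowerSeries.coeff (n + 1) F

/-- The exponential generating function `S(x,q;z) = Σ_{n≥0} S_n(x,q) zⁿ/n!`. -/
noncomputable def SserQ : PowerSeries (Polynomial (Polynomial ℚ)) :=
  PowerSeries.mk fun n => ((n.factorial : ℚ)⁻¹) • SqA n

/-- The exponential generating function `S(x,z) = Σ_{n≥0} S_n(x) zⁿ/n!`. -/
noncomputable def Sser1 : PowerSeries (Polynomial (Polynomial ℚ)) :=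
  PowerSeries.mk fun n => ((n.factorial : ℚ)⁻¹) • SxA n

/-- The exponential `exp(F) = Σ_j F^j/j!` of a power series `F` with zero constant
term (each coefficient is a finite sum since `F^j` has order at least `j`). -/
noncomputable def myExp (F : PowerSeries (Polynomial (Polynomial ℚ))) :
    PowerSeries (Polynomial (Polynomial ℚ)) :=
  PowerSeries.mk fun m =>
    ∑ j ∈ Finset.range (m + 1), ((j.factorial : ℚ)⁻¹) • PowerSeries.coeff m (F ^ j)

namespace Aux
abbrev R := Polynomial (Polynomial ℚ)
open PowerSeries

noncomputable def Dx (F : PowerSeries R) : PowerSeries R :=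
  PowerSeries.mk fun n => Polynomial.derivative (coeff n F)

lemma coeff_Dx (F : PowerSeries R) (n : ℕ) :
    coeff n (Dx F) = Polynomial.derivative (coeff n F) := coeff_mk _ _

lemma coeff_Dz (F : PowerSeries R) (n : ℕ) :
    coeff n (Dz F) = (n + 1) • coeff (n + 1) F := coeff_mk _ _

lemma Dz_eq (F : PowerSeries R) : Dz F = derivativeFun F := by
  refine PowerSeries.ext fun n => ?_
  rw [coeff_Dz, show derivativeFun F = PowerSeries.derivative R F from rfl, coeff_derivative, nsmul_eq_mul, mul_comm]
  push_cast
  ring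

lemma Dz_mul (F G : PowerSeries R) : Dz (F * G) = Dz F * G + F * Dz G := by
  rw [Dz_eq, Dz_eq, Dz_eq, derivativeFun_mul]
  simp only [smul_eq_mul]
  ring

lemma Dz_sub (F G : PowerSeries R) : Dz (F - G) = Dz F - Dz G := by
  refine PowerSeries.ext fun n => ?_
  simp [coeff_Dz, smul_sub]

lemma Dz_pow (F : PowerSeries R) (j : ℕ) :
    Dz (F ^ (j + 1)) = (j + 1) • (F ^ j * Dz F) := by
  induction j with
  | zero => simp
  | succ j ih =>
    rw [pow_succ, Dz_mul, ih, smul_mul_assoc]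
    simp only [nsmul_eq_mul]
    push_cast
    ring

lemma Dz_C_mul (a : R) (F : PowerSeries R) :
    Dz (PowerSeries.C a * F) = PowerSeries.C a * Dz F := by
  refine PowerSeries.ext fun n => ?_
  rw [coeff_Dz, coeff_C_mul, coeff_C_mul, coeff_Dz]
  simp only [nsmul_eq_mul]
  ring

lemma Dx_mul (F G : PowerSeries R) : Dx (F * G) = Dx F * G + F * Dx G := by
  refine PowerSeries.ext fun n => ?_
  rw [map_add, coeff_Dx, PowerSeries.coeff_mul, Polynomial.derivative_sum]
  rw [PowerSeries.coeff_mul, PowerSeries.coeff_mul]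
  have h : ∀ p ∈ Finset.HasAntidiagonal.antidiagonal n,
      Polynomial.derivative (coeff p.1 F * coeff p.2 G) =
        Polynomial.derivative (coeff p.1 F) * coeff p.2 G +
          coeff p.1 F * Polynomial.derivative (coeff p.2 G) :=
    fun p _ => Polynomial.derivative_mul
  rw [Finset.sum_congr rfl h, Finset.sum_add_distrib]
  simp only [coeff_Dx]

lemma Dx_C (a : R) : Dx (PowerSeries.C a) = PowerSeries.C (Polynomial.derivative a) := by
  refine PowerSeries.ext fun n => ?_
  rw [coeff_Dx, PowerSeries.coeff_C, PowerSeries.coeff_C]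
  split <;> simp

lemma Dx_one : Dx (1 : PowerSeries R) = 0 := by
  rw [← map_one (PowerSeries.C (R := R)), Dx_C]
  simp

lemma Dx_pow (F : PowerSeries R) (j : ℕ) :
    Dx (F ^ (j + 1)) = (j + 1) • (F ^ j * Dx F) := by
  induction j with
  | zero => simp
  | succ j ih =>
    rw [pow_succ, Dx_mul, ih, smul_mul_assoc]
    simp only [nsmul_eq_mul]
    push_cast
    ring

lemma DxDz_comm (F : PowerSeries R) : Dx (Dz F) = Dz (Dx F) := by
  refine PowerSeries.ext fun n => ?_
  simp [coeff_Dx, coeff_Dz, map_nsmul]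

end Aux

namespace Aux2
open PowerSeries Aux

lemma nsmul_cancel {a b : R} {n : ℕ} (h : (n + 1) • a = (n + 1) • b) : a = b := by
  have h' : ((n + 1 : ℕ) : ℚ) • a = ((n + 1 : ℕ) : ℚ) • b := by
    rw [Nat.cast_smul_eq_nsmul, Nat.cast_smul_eq_nsmul]; exact h
  have h2 : ((n + 1 : ℕ) : ℚ)⁻¹ • (((n + 1 : ℕ) : ℚ) • a) =
      ((n + 1 : ℕ) : ℚ)⁻¹ • (((n + 1 : ℕ) : ℚ) • b) := congrArg _ h'
  have hne : ((n + 1 : ℕ) : ℚ) ≠ 0 := by positivity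
  rw [smul_smul, smul_smul, inv_mul_cancel₀ hne, one_smul, one_smul] at h2
  exact h2

lemma eq_zero_of_dz (M A : PowerSeries R) (h : Dz M = A * M)
    (h0 : coeff 0 M = 0) : M = 0 := by
  have key : ∀ n, coeff n M = 0 := by
    intro n
    induction n using Nat.strong_induction_on with
    | _ n ih =>
      match n with
      | 0 => exact h0
      | n + 1 =>
        have hc := congrArg (coeff n) h
        rw [coeff_Dz, PowerSeries.coeff_mul] at hc
        rw [Finset.sum_eq_zero (fun p hp => by
          rw [ih p.2 (by
            have := Finset.HasAntidiagonal.mem_antidiagonal.mp hp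
            omega), mul_zero])] at hc
        have : (n + 1) • coeff (n + 1) M = (n + 1) • (0 : R) := by
          rw [hc, smul_zero]
        exact nsmul_cancel this
  refine PowerSeries.ext fun n => ?_
  rw [key n, map_zero]

lemma coeff_X_mul_Dz (F : PowerSeries R) (n : ℕ) :
    coeff n (PowerSeries.X * Dz F) = n • coeff n F := by
  cases n with
  | zero => simp
  | succ k => rw [coeff_succ_X_mul, coeff_Dz]

noncomputable def a0 : R := Polynomial.X * (1 - 2 * Polynomial.X)

/-- the PDE `(1 - x z) F_z = b F + x(1-2x) F_x` -/
def Peq (b : R) (F : PowerSeries R) : Prop :=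
  Dz F = PowerSeries.C b * F +
    PowerSeries.C Polynomial.X * (PowerSeries.X * Dz F) +
    PowerSeries.C a0 * Dx F

lemma peq_unique {b : R} {F G : PowerSeries R} (hF : Peq b F) (hG : Peq b G)
    (h0 : coeff 0 F = coeff 0 G) : F = G := by
  have key : ∀ n, coeff n F = coeff n G := by
    intro n
    induction n with
    | zero => exact h0
    | succ n ih =>
      have eF := congrArg (coeff n) hF
      have eG := congrArg (coeff n) hG
      rw [map_add, map_add, coeff_C_mul, coeff_C_mul, coeff_C_mul, coeff_X_mul_Dz,
        coeff_Dz, coeff_Dx] at eF eG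
      refine nsmul_cancel (n := n) ?_
      rw [eF, eG, ih]
  exact PowerSeries.ext key

lemma peq_of_rec (b : R) (P : ℕ → R)
    (h : ∀ n, P (n + 1) = (b + (n : R) * Polynomial.X) * P n +
      a0 * Polynomial.derivative (P n)) :
    Peq b (PowerSeries.mk fun n => ((n.factorial : ℚ)⁻¹) • P n) := by
  refine PowerSeries.ext fun n => ?_
  rw [map_add, map_add, coeff_C_mul, coeff_C_mul, coeff_C_mul, coeff_X_mul_Dz,
    coeff_Dz, coeff_Dx, coeff_mk, coeff_mk, Polynomial.derivative_smul, h n]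
  have h1 : ((n.factorial : ℚ)) ≠ 0 := Nat.cast_ne_zero.mpr n.factorial_ne_zero
  have hc : ((n + 1 : ℕ) : ℚ) * (((n + 1).factorial : ℚ))⁻¹ = ((n.factorial : ℚ))⁻¹ := by
    rw [Nat.factorial_succ]
    have h2 : ((n : ℚ) + 1) ≠ 0 := by positivity
    push_cast
    field_simp
  rw [← Nat.cast_smul_eq_nsmul ℚ, smul_smul, hc]
  simp only [mul_smul_comm]
  rw [smul_comm (n : ℕ) ((n.factorial : ℚ))⁻¹]
  simp only [← smul_add]
  congr 1
  simp only [nsmul_eq_mul]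
  ring

end Aux2

namespace Aux3
open PowerSeries Aux Aux2

variable {F : PowerSeries R}

lemma coeff_pow_eq_zero (h0 : coeff 0 F = 0) :
    ∀ j k, k < j → coeff k (F ^ j) = 0 := by
  intro j
  induction j with
  | zero => exact fun k hk => absurd hk (by omega)
  | succ j ih =>
    intro k hk
    rw [pow_succ, PowerSeries.coeff_mul]
    refine Finset.sum_eq_zero fun p hp => ?_
    have hmem := Finset.HasAntidiagonal.mem_antidiagonal.mp hp
    by_cases hc : p.1 < j
    · rw [ih p.1 hc, zero_mul]
    · have : p.2 = 0 := by omega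
      rw [this, h0, mul_zero]

lemma coeff_myExp_eq (h0 : coeff 0 F = 0) (m N : ℕ) (hmN : m < N) :
    coeff m (myExp F) =
      ∑ j ∈ Finset.range N, ((j.factorial : ℚ)⁻¹) • coeff m (F ^ j) := by
  rw [myExp, coeff_mk]
  refine Finset.sum_subset (Finset.range_subset_range.mpr (by omega)) fun j hj hj2 => ?_
  rw [Finset.mem_range] at hj2
  rw [coeff_pow_eq_zero h0 j m (by omega), smul_zero]

lemma coeff_mul_congr {G G' H : PowerSeries R} (m : ℕ)
    (h : ∀ k ≤ m, coeff k G = coeff k G') :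
    coeff m (H * G) = coeff m (H * G') := by
  rw [PowerSeries.coeff_mul, PowerSeries.coeff_mul]
  refine Finset.sum_congr rfl fun p hp => ?_
  have hmem := Finset.HasAntidiagonal.mem_antidiagonal.mp hp
  rw [h p.2 (by omega)]

lemma coeff_mul_trunc (h0 : coeff 0 F = 0) (H : PowerSeries R) (m : ℕ) :
    coeff m (H * myExp F) =
      ∑ j ∈ Finset.range (m + 1), ((j.factorial : ℚ)⁻¹) • coeff m (H * F ^ j) := by
  have hEm : coeff m (H * myExp F) =
      coeff m (H * ∑ j ∈ Finset.range (m + 1), ((j.factorial : ℚ)⁻¹) • F ^ j) := by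
    refine coeff_mul_congr m fun k hk => ?_
    rw [coeff_myExp_eq h0 k (m + 1) (by omega), map_sum]
    exact Finset.sum_congr rfl fun j _ => by rw [PowerSeries.coeff_smul]
  rw [hEm, Finset.mul_sum, map_sum]
  exact Finset.sum_congr rfl fun j _ => by rw [mul_smul_comm, PowerSeries.coeff_smul]

lemma fact_inv_succ (j : ℕ) :
    ((((j + 1).factorial : ℚ)))⁻¹ * ((j + 1 : ℕ) : ℚ) = ((j.factorial : ℚ))⁻¹ := by
  rw [Nat.factorial_succ]
  have h1 : ((j.factorial : ℚ)) ≠ 0 := Nat.cast_ne_zero.mpr j.factorial_ne_zero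
  have h2 : ((j : ℚ) + 1) ≠ 0 := by positivity
  push_cast
  field_simp

lemma Dz_myExp (h0 : coeff 0 F = 0) : Dz (myExp F) = Dz F * myExp F := by
  refine PowerSeries.ext fun m => ?_
  rw [coeff_Dz, coeff_myExp_eq h0 (m + 1) (m + 2) (by omega), Finset.smul_sum,
    coeff_mul_trunc h0, Finset.sum_range_succ']
  have hzero : (m + 1) • (((0 : ℕ).factorial : ℚ))⁻¹ • coeff (m + 1) (F ^ (0 : ℕ)) = 0 := by
    rw [pow_zero, PowerSeries.coeff_one, if_neg (by omega)]
    simp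
  rw [hzero, add_zero]
  refine Finset.sum_congr rfl fun j _ => ?_
  have e1 : (m + 1) • coeff (m + 1) (F ^ (j + 1)) = (j + 1) • coeff m (F ^ j * Dz F) := by
    rw [← coeff_Dz, Dz_pow, map_nsmul]
  rw [smul_comm, e1, ← Nat.cast_smul_eq_nsmul ℚ, smul_smul, fact_inv_succ, mul_comm (Dz F)]

lemma Dx_myExp (h0 : coeff 0 F = 0) : Dx (myExp F) = Dx F * myExp F := by
  refine PowerSeries.ext fun m => ?_
  have hLHS : coeff m (Dx (myExp F)) =
      ∑ j ∈ Finset.range m, ((j.factorial : ℚ)⁻¹) • coeff m (F ^ j * Dx F) := by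
    rw [coeff_Dx, myExp, coeff_mk, Polynomial.derivative_sum, Finset.sum_range_succ']
    have h00 : Polynomial.derivative ((((0 : ℕ).factorial : ℚ))⁻¹ • coeff m (F ^ (0 : ℕ))) = 0 := by
      rw [pow_zero, Polynomial.derivative_smul, PowerSeries.coeff_one]
      split <;> simp
    rw [h00, add_zero]
    refine Finset.sum_congr rfl fun j _ => ?_
    rw [Polynomial.derivative_smul, ← coeff_Dx, Dx_pow, map_nsmul,
      ← Nat.cast_smul_eq_nsmul ℚ, smul_smul, fact_inv_succ]
  have hlast : coeff m (Dx F * F ^ m) = 0 := by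
    rw [PowerSeries.coeff_mul]
    refine Finset.sum_eq_zero fun p hp => ?_
    have hmem := Finset.HasAntidiagonal.mem_antidiagonal.mp hp
    by_cases hc : p.2 < m
    · rw [coeff_pow_eq_zero h0 m p.2 hc, mul_zero]
    · have hp1 : p.1 = 0 := by omega
      rw [hp1, coeff_Dx, h0]
      simp
  have hRHS : coeff m (Dx F * myExp F) =
      ∑ j ∈ Finset.range m, ((j.factorial : ℚ)⁻¹) • coeff m (Dx F * F ^ j) := by
    rw [coeff_mul_trunc h0, Finset.sum_range_succ, hlast, smul_zero, add_zero]
  rw [hLHS, hRHS]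
  exact Finset.sum_congr rfl fun j _ => by rw [mul_comm (Dx F)]

end Aux3

namespace Aux4
open PowerSeries Aux Aux2 Aux3

lemma a0_def : a0 = Polynomial.X * (1 - 2 * Polynomial.X) := rfl

lemma SqA_rec (n : ℕ) : SqA (n + 1) =
    ((Polynomial.C Polynomial.X : R) + (n : R) * Polynomial.X) * SqA n +
      a0 * Polynomial.derivative (SqA n) := by
  have hC : (Polynomial.C ((n : ℚ) • (1 : Polynomial ℚ)) : R) = (n : R) := by
    rw [← Algebra.algebraMap_eq_smul_one, Polynomial.algebraMap_eq, map_natCast, map_natCast]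
  rw [SqA, hC, a0_def]

lemma SxA_rec (n : ℕ) : SxA (n + 1) =
    ((1 : R) + (n : R) * Polynomial.X) * SxA n + a0 * Polynomial.derivative (SxA n) := by
  unfold SxA
  rw [SqA_rec, a0_def]
  simp [Polynomial.map_add, Polynomial.map_mul, Polynomial.map_natCast, Polynomial.map_one,
    Polynomial.map_sub, Polynomial.map_ofNat, Polynomial.derivative_map, a0_def]

lemma hq : Peq (Polynomial.C Polynomial.X) SserQ :=
  peq_of_rec _ SqA fun n => SqA_rec n

lemma hs : Peq 1 Sser1 :=
  peq_of_rec 1 SxA fun n => SxA_rec n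

lemma c0SserQ : coeff 0 SserQ = 1 := by
  show coeff 0 (PowerSeries.mk _) = 1
  rw [coeff_mk]
  simp [SqA]

lemma c0Sser1 : coeff 0 Sser1 = 1 := by
  show coeff 0 (PowerSeries.mk _) = 1
  rw [coeff_mk]
  simp [SxA, SqA]

lemma c0myExp (G : PowerSeries R) : coeff 0 (myExp G) = 1 := by
  rw [myExp, coeff_mk]
  simp

end Aux4

/-- `S(x,q;z) = S(x,z)^q`, where the `q`-th power is defined via `exp(q·log S(x,z))`:
for any power series `L` with zero constant term satisfying `S(x,z)·L' = S(x,z)'`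
(i.e. `L = log S(x,z)`), we have `S(x,q;z) = exp(q·L)`. -/
theorem stmt17 (L : PowerSeries (Polynomial (Polynomial ℚ)))
    (hL0 : PowerSeries.coeff 0 L = 0)
    (hL : Sser1 * Dz L = Dz Sser1) :
    SserQ = myExp (PowerSeries.C (Polynomial.C Polynomial.X) * L) := by
  open PowerSeries Aux Aux2 Aux3 Aux4 in
  set q : R := Polynomial.C Polynomial.X with hqdef
  have hF0 : coeff 0 (PowerSeries.C q * L) = 0 := by
    rw [coeff_C_mul, hL0, mul_zero]
  have hSu : IsUnit Sser1 := by
    rw [PowerSeries.isUnit_iff_constantCoeff, ← PowerSeries.coeff_zero_eq_constantCoeff_apply,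
      c0Sser1]
    exact isUnit_one
  have hM : Dz (Sser1 * Dx L - Dx Sser1) = Dz L * (Sser1 * Dx L - Dx Sser1) := by
    have e2 := congrArg Dx hL
    rw [Dx_mul, DxDz_comm, DxDz_comm] at e2
    rw [Dz_sub, Dz_mul]
    linear_combination e2 - Dx L * hL
  have hMz : Sser1 * Dx L - Dx Sser1 = 0 := by
    refine eq_zero_of_dz _ _ hM ?_
    rw [map_sub, PowerSeries.coeff_mul]
    simp [Finset.Nat.antidiagonal_zero, coeff_Dx, hL0, c0Sser1]
  have hLx : Sser1 * Dx L = Dx Sser1 := sub_eq_zero.mp hMz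
  have key : Sser1 * Dz L =
      Sser1 * (1 + PowerSeries.C Polynomial.X * (PowerSeries.X * Dz L) +
        PowerSeries.C a0 * Dx L) := by
    rw [hL, show Dz Sser1 = _ from hs, ← hL, ← hLx, map_one]
    ring
  have hLpde : Dz L = 1 + PowerSeries.C Polynomial.X * (PowerSeries.X * Dz L) +
      PowerSeries.C a0 * Dx L := hSu.mul_left_cancel key
  have hEz : Dz (myExp (PowerSeries.C q * L)) =
      PowerSeries.C q * Dz L * myExp (PowerSeries.C q * L) := by
    rw [Dz_myExp hF0, Dz_C_mul]
  have hEx : Dx (myExp (PowerSeries.C q * L)) =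
      PowerSeries.C q * Dx L * myExp (PowerSeries.C q * L) := by
    rw [Dx_myExp hF0, Dx_mul, Dx_C, Polynomial.derivative_C, map_zero, zero_mul, zero_add]
  have hE : Peq q (myExp (PowerSeries.C q * L)) := by
    show Dz _ = _
    rw [hEz, hEx]
    linear_combination (PowerSeries.C q * myExp (PowerSeries.C q * L)) * hLpde
  exact peq_unique hq hE (by rw [c0SserQ, c0myExp])
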